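/- Consider one-dimensional online gradient descent with randomized rounding on the feasible set [−R, R] (R > 0): β̂_1 = 0; on each round t = 1, …, T the adversary, seeing the entire history β̂_1, …, β̂_t, chooses a gradient g_t with |g_t| ≤ G; the algorithm sets β_{t+1} = max(−R, min(R, β̂_t − η_t g_t)) and then β̂_{t+1} = RandomRound(β_{t+1}, ε_t), where the rounding randomness on each round is independent of everything else. Assume the learning-rate schedule η_t > 0 is non-increasing, the resolution schedule satisfies ε_t ≤ γ·η_t for a constant γ > 0, and each ε_t is chosen so that −R and R lie on the grid ε_t·ℤ. Then for any comparator point β* ∈ [−R, R], the expected regret satisfies E[Σ_{t=1}^T g_t·(β̂_t − β*)] ≤ (2R)²/(2η_T) + (1/2)·(G² + γ²)·Σ_{t=1}^T η_t + γ·R·√T, where the expectation is over the rounding randomness. -/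

import Mathlib

open MeasureTheory ProbabilityTheory

/-- Randomized rounding of `β` to the grid `ε·ℤ`, driven by a uniform sample `u ∈ [0,1]`:
with `a = ε⌊β/ε⌋` and `b = ε⌈β/ε⌉`, return `b` with probability `(β - a)/ε` and `a`
otherwise. -/
noncomputable def randomRound (ε β u : ℝ) : ℝ :=
  if u < (β - ε * ⌊β / ε⌋) / ε then ε * ⌈β / ε⌉ else ε * ⌊β / ε⌋


lemma rr_eq (ε β u : ℝ) :
    randomRound ε β u = ε * ⌊β / ε⌋ ∨ randomRound ε β u = ε * ⌈β / ε⌉ := by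
  unfold randomRound; split <;> simp

lemma floor_mul_le {ε β : ℝ} (hε : 0 < ε) : ε * ⌊β / ε⌋ ≤ β := by
  have := Int.floor_le (β / ε)
  calc ε * ⌊β / ε⌋ ≤ ε * (β / ε) := by nlinarith
  _ = β := by field_simp

lemma le_ceil_mul {ε β : ℝ} (hε : 0 < ε) : β ≤ ε * ⌈β / ε⌉ := by
  have := Int.le_ceil (β / ε)
  calc β = ε * (β / ε) := by field_simp
  _ ≤ ε * ⌈β / ε⌉ := by nlinarith

lemma rr_abs_le {ε β u R : ℝ} (hε : 0 < ε) (k : ℤ) (hk : R = k * ε)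
    (hβ : |β| ≤ R) : |randomRound ε β u| ≤ R := by
  rw [abs_le] at hβ ⊢
  have hfl : (-R : ℝ) ≤ ε * ⌊β / ε⌋ := by
    have h1 : ((-k : ℤ) : ℝ) ≤ β / ε := by
      rw [le_div_iff₀ hε]
      push_cast; nlinarith [hβ.1]
    have h2 : (-k : ℤ) ≤ ⌊β / ε⌋ := Int.le_floor.mpr h1
    have h3 : ((-k : ℤ) : ℝ) ≤ (⌊β / ε⌋ : ℝ) := by exact_mod_cast h2
    push_cast at h3
    nlinarith [mul_le_mul_of_nonneg_left h3 hε.le]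
  have hcl : ε * ⌈β / ε⌉ ≤ R := by
    have h1 : β / ε ≤ (k : ℝ) := by rw [div_le_iff₀ hε]; nlinarith [hβ.2]
    have h2 : ⌈β / ε⌉ ≤ k := Int.ceil_le.mpr h1
    have h3 : ((⌈β / ε⌉ : ℤ) : ℝ) ≤ (k : ℝ) := by exact_mod_cast h2
    nlinarith
  have hfl2 : ε * ⌊β / ε⌋ ≤ R := (floor_mul_le hε).trans hβ.2
  have hcl2 : (-R : ℝ) ≤ ε * ⌈β / ε⌉ := hβ.1.trans (le_ceil_mul hε)
  rcases rr_eq ε β u with h | h <;> rw [h] <;> exact ⟨by assumption, by assumption⟩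

lemma measurable_rr (ε : ℝ) : Measurable (fun p : ℝ × ℝ => randomRound ε p.1 p.2) := by
  unfold randomRound
  have hc : Measurable (Int.cast : ℤ → ℝ) := measurable_from_top
  have hfl : Measurable (fun p : ℝ × ℝ => ε * (⌊p.1 / ε⌋ : ℝ)) :=
    measurable_const.mul (hc.comp (Int.measurable_floor.comp (measurable_fst.div_const ε)))
  have hce : Measurable (fun p : ℝ × ℝ => ε * (⌈p.1 / ε⌉ : ℝ)) :=
    measurable_const.mul (hc.comp (Int.measurable_ceil.comp (measurable_fst.div_const ε)))
  have h1 : Measurable (fun p : ℝ × ℝ => (p.1 - ε * ⌊p.1 / ε⌋) / ε) :=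
    (measurable_fst.sub hfl).div_const ε
  exact Measurable.ite (measurableSet_lt measurable_snd h1) hce hfl

lemma rr_expect_sq (ε x c : ℝ) (hε : 0 < ε) :
    ∫ u, (randomRound ε x u - c)^2 ∂(volume.restrict (Set.Icc (0:ℝ) 1))
      ≤ (x - c)^2 + ε^2 := by
  set a := ε * (⌊x / ε⌋ : ℝ) with ha
  set b := ε * (⌈x / ε⌉ : ℝ) with hb
  set p := (x - a) / ε with hp
  have hax : a ≤ x := floor_mul_le hε
  have hp0 : 0 ≤ p := div_nonneg (by linarith) hε.le
  have hp1 : p ≤ 1 := by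
    rw [hp, div_le_one hε]
    have h1 : x / ε < (⌊x / ε⌋ : ℝ) + 1 := Int.lt_floor_add_one (x / ε)
    have h2 : x < ε * ((⌊x / ε⌋ : ℝ) + 1) := by
      calc x = ε * (x / ε) := by field_simp
      _ < ε * ((⌊x / ε⌋ : ℝ) + 1) := by nlinarith
    rw [ha]; nlinarith
  have hxp : x = a + p * ε := by rw [hp]; field_simp; ring
  have hrr : ∀ u, randomRound ε x u = if u < p then b else a := fun u => rfl
  have hfun : ∀ u : ℝ, (randomRound ε x u - c)^2
      = Set.indicator (Set.Iio p) (fun _ => (b-c)^2 - (a-c)^2) u + (a-c)^2 := by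
    intro u
    rw [hrr]
    by_cases h : u < p
    · rw [if_pos h, Set.indicator_of_mem (Set.mem_Iio.mpr h)]; ring
    · rw [if_neg h, Set.indicator_of_notMem (by simpa using h)]; ring
  have hmeas : (volume.restrict (Set.Icc (0:ℝ) 1)) (Set.Iio p) = ENNReal.ofReal p := by
    rw [Measure.restrict_apply measurableSet_Iio]
    have : Set.Iio p ∩ Set.Icc (0:ℝ) 1 = Set.Ico 0 p := by
      ext u
      simp only [Set.mem_inter_iff, Set.mem_Iio, Set.mem_Icc, Set.mem_Ico]
      constructor
      · rintro ⟨h1, h2, _⟩; exact ⟨h2, h1⟩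
      · rintro ⟨h1, h2⟩; exact ⟨h2, h1, h2.le.trans hp1⟩
    rw [this, Real.volume_Ico, sub_zero]
  have hint : ∫ u, (randomRound ε x u - c)^2 ∂(volume.restrict (Set.Icc (0:ℝ) 1))
      = ((b-c)^2 - (a-c)^2) * p + (a-c)^2 := by
    simp_rw [hfun]
    rw [integral_add ((integrable_const _).indicator measurableSet_Iio) (integrable_const _),
      integral_indicator_const _ measurableSet_Iio, integral_const, measureReal_def, measureReal_def, hmeas]
    simp [Real.volume_Icc, ENNReal.toReal_ofReal hp0]
    ring
  rw [hint]
  have hcf : (⌊x / ε⌋ : ℤ) ≤ ⌈x / ε⌉ := Int.floor_le_ceil _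
  have hfc : (⌈x / ε⌉ : ℤ) ≤ ⌊x / ε⌋ + 1 := Int.ceil_le_floor_add_one _
  rcases eq_or_lt_of_le hcf with heq | hlt
  · have hba : b = a := by rw [hb, ha, ← heq]
    have hxa : x = a := le_antisymm (by
      have := le_ceil_mul hε (β := x); rw [← hba]; exact this) hax
    rw [hba, hxa]
    nlinarith [sq_nonneg ε]
  · have hceq : (⌈x / ε⌉ : ℤ) = ⌊x / ε⌋ + 1 := by omega
    have hba : b = a + ε := by rw [hb, ha, hceq]; push_cast; ring
    rw [hba, hxp]
    nlinarith [sq_nonneg (2*p*ε - ε), sq_nonneg ε]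

lemma rr_abs_le_add {ε x u : ℝ} (hε : 0 < ε) : |randomRound ε x u| ≤ |x| + ε := by
  have h1 : ε * (⌊x / ε⌋ : ℝ) ≤ x := floor_mul_le hε
  have h2 : x ≤ ε * (⌈x / ε⌉ : ℝ) := le_ceil_mul hε
  have h3 : x - ε < ε * (⌊x / ε⌋ : ℝ) := by
    have := Int.lt_floor_add_one (x / ε)
    have hx : x = ε * (x / ε) := by field_simp
    nlinarith
  have h4 : ε * (⌈x / ε⌉ : ℝ) < x + ε := by
    have := Int.ceil_lt_add_one (x / ε)
    have hx : x = ε * (x / ε) := by field_simp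
    nlinarith
  rcases rr_eq ε x u with h | h <;> rw [h, abs_le] <;>
    cases' abs_le.mp (le_refl |x|) with hl hr <;>
    constructor <;> nlinarith [neg_abs_le x, le_abs_self x]

lemma key_step {Ω : Type*} [MeasurableSpace Ω] (P : Measure Ω) [IsProbabilityMeasure P]
    (X V : Ω → ℝ) (hX : Measurable X) (hV : Measurable V)
    (hind : IndepFun X V P) (hlaw : P.map V = volume.restrict (Set.Icc (0:ℝ) 1))
    (ε c R : ℝ) (hε : 0 < ε) (hXb : ∀ ω, |X ω| ≤ R) :
    ∫ ω, (randomRound ε (X ω) (V ω) - c)^2 ∂P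
      ≤ (∫ ω, (X ω - c)^2 ∂P) + ε^2 := by
  set F : ℝ × ℝ → ℝ := fun q => (randomRound ε q.1 q.2 - c)^2 with hF
  have hFmeas : Measurable F := ((measurable_rr ε).sub measurable_const).pow_const 2
  have hmap : P.map (fun ω => (X ω, V ω)) = (P.map X).prod (P.map V) :=
    (indepFun_iff_map_prod_eq_prod_map_map hX.aemeasurable hV.aemeasurable).mp hind
  have hpairmeas : Measurable (fun ω => (X ω, V ω)) := hX.prodMk hV
  have hFbdd : ∀ ω, |F (X ω, V ω)| ≤ (R + ε + |c|)^2 := by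
    intro ω
    have h1 : |randomRound ε (X ω) (V ω)| ≤ R + ε :=
      (rr_abs_le_add hε).trans (by linarith [hXb ω])
    have h2 : |randomRound ε (X ω) (V ω) - c| ≤ R + ε + |c| := by
      calc |randomRound ε (X ω) (V ω) - c| ≤ |randomRound ε (X ω) (V ω)| + |c| := abs_sub _ _
      _ ≤ R + ε + |c| := by linarith
    rw [hF, abs_of_nonneg (sq_nonneg _)]
    calc (randomRound ε (X ω) (V ω) - c)^2 = |randomRound ε (X ω) (V ω) - c|^2 := (sq_abs _).symm
    _ ≤ (R + ε + |c|)^2 := by nlinarith [abs_nonneg (randomRound ε (X ω) (V ω) - c)]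
  have hFintP : Integrable (fun ω => F (X ω, V ω)) P := by
    refine Integrable.mono' (integrable_const ((R + ε + |c|)^2))
      (hFmeas.comp hpairmeas).aestronglyMeasurable (Filter.Eventually.of_forall hFbdd)
  have hFint : Integrable F ((P.map X).prod (P.map V)) := by
    rw [← hmap]
    exact (integrable_map_measure hFmeas.aestronglyMeasurable hpairmeas.aemeasurable).mpr hFintP
  have step1 : ∫ ω, F (X ω, V ω) ∂P = ∫ q, F q ∂((P.map X).prod (P.map V)) := by
    rw [← hmap, integral_map hpairmeas.aemeasurable hFmeas.aestronglyMeasurable]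
  have step2 : ∫ q, F q ∂((P.map X).prod (P.map V))
      = ∫ x, ∫ u, F (x, u) ∂(P.map V) ∂(P.map X) := integral_prod F hFint
  have hinner : ∀ x : ℝ, ∫ u, F (x, u) ∂(P.map V) ≤ (x - c)^2 + ε^2 := by
    intro x
    rw [hlaw]
    exact rr_expect_sq ε x c hε
  have hGmeas : Measurable (fun x : ℝ => (x - c)^2 + ε^2) :=
    ((measurable_id.sub measurable_const).pow_const 2).add measurable_const
  have hG : Integrable (fun x => (x - c)^2 + ε^2) (P.map X) := by
    rw [integrable_map_measure hGmeas.aestronglyMeasurable hX.aemeasurable]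
    refine Integrable.mono' (integrable_const ((R + |c|)^2 + ε^2))
      (hGmeas.comp hX).aestronglyMeasurable
      (Filter.Eventually.of_forall fun ω => ?_)
    have h1 : |X ω - c| ≤ R + |c| := by
      calc |X ω - c| ≤ |X ω| + |c| := abs_sub _ _
      _ ≤ R + |c| := by linarith [hXb ω]
    simp only [Function.comp_apply, Real.norm_eq_abs]
    rw [abs_of_nonneg (by positivity : (0:ℝ) ≤ (X ω - c)^2 + ε^2)]
    nlinarith [abs_nonneg (X ω - c), sq_abs (X ω - c)]
  have step3 : ∫ x, ∫ u, F (x, u) ∂(P.map V) ∂(P.map X)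
      ≤ ∫ x, ((x - c)^2 + ε^2) ∂(P.map X) :=
    integral_mono hFint.integral_prod_left hG hinner
  have step4 : ∫ x, ((x - c)^2 + ε^2) ∂(P.map X) = (∫ ω, (X ω - c)^2 ∂P) + ε^2 := by
    rw [integral_map hX.aemeasurable hGmeas.aestronglyMeasurable]
    have hXint : Integrable (fun ω => (X ω - c)^2) P := by
      refine Integrable.mono' (integrable_const ((R + |c|)^2))
        (((hX.sub measurable_const).pow_const 2).aestronglyMeasurable)
        (Filter.Eventually.of_forall fun ω => ?_)
      have h1 : |X ω - c| ≤ R + |c| := by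
        calc |X ω - c| ≤ |X ω| + |c| := abs_sub _ _
        _ ≤ R + |c| := by linarith [hXb ω]
      simp only [Real.norm_eq_abs]
      rw [abs_of_nonneg (sq_nonneg (X ω - c))]
      nlinarith [abs_nonneg (X ω - c), sq_abs (X ω - c)]
    rw [integral_add hXint (integrable_const _), integral_const]
    simp
  calc ∫ ω, (randomRound ε (X ω) (V ω) - c)^2 ∂P = ∫ ω, F (X ω, V ω) ∂P := rfl
  _ = ∫ q, F q ∂((P.map X).prod (P.map V)) := step1
  _ = ∫ x, ∫ u, F (x, u) ∂(P.map V) ∂(P.map X) := step2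
  _ ≤ ∫ x, ((x - c)^2 + ε^2) ∂(P.map X) := step3
  _ = (∫ ω, (X ω - c)^2 ∂P) + ε^2 := step4

lemma clamp_sq {R βstar y : ℝ} (h1 : -R ≤ βstar) (h2 : βstar ≤ R) :
    (max (-R) (min R y) - βstar)^2 ≤ (y - βstar)^2 := by
  rcases le_total y R with hy | hy
  · rw [min_eq_right hy]
    rcases le_total (-R) y with h3 | h3
    · rw [max_eq_right h3]
    · rw [max_eq_left h3]; nlinarith
  · rw [min_eq_left hy, max_eq_right (by linarith)]
    nlinarith

lemma clamp_abs {R y : ℝ} (hR : 0 < R) : |max (-R) (min R y)| ≤ R := by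
  rw [abs_le]
  constructor
  · exact le_max_left _ _
  · exact max_le (by linarith) (min_le_left _ _)

set_option maxHeartbeats 1000000 in
/-- Expected regret of one-dimensional online gradient descent with randomized rounding
on `[-R, R]` against an adaptive adversary: with a non-increasing learning-rate schedule
`η_t`, resolutions `ε_t ≤ γ η_t` whose grids contain `±R`, gradients bounded by `G`
chosen adaptively (`g_t = A_t(β̂_1, …, β̂_t)`), updates
`β_{t+1} = Π_{[-R,R]}(β̂_t - η_t g_t)` and `β̂_{t+1} = RandomRound(β_{t+1}, ε_t)` with
fresh independent uniform randomness, the expected regret over rounds `t = 1, …, T`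
against any comparator `β* ∈ [-R, R]` satisfies
`E[Σ_t g_t (β̂_t - β*)] ≤ (2R)²/(2 η_T) + ½ (G² + γ²) Σ_t η_t + γ R √T`. -/
theorem ogd_randomized_rounding_regret
    {Ω : Type*} [MeasurableSpace Ω] (P : Measure Ω) [IsProbabilityMeasure P]
    (T : ℕ) (hT : 1 ≤ T)
    (R G γ : ℝ) (hR : 0 < R) (hG : 0 ≤ G) (hγ : 0 < γ)
    (η ε : ℕ → ℝ)
    (hηpos : ∀ t, 0 < η t) (hηmono : ∀ s t, s ≤ t → η t ≤ η s)
    (hεpos : ∀ t, 0 < ε t) (hεη : ∀ t, ε t ≤ γ * η t)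
    (hgrid : ∀ t, ∃ k : ℤ, R = k * ε t)
    (U : ℕ → Ω → ℝ) (hUmeas : ∀ t, Measurable (U t))
    (hUindep : iIndepFun U P)
    (hUunif : ∀ t, P.map (U t) = volume.restrict (Set.Icc (0 : ℝ) 1))
    (A : (t : ℕ) → (Fin t → ℝ) → ℝ) (hAmeas : ∀ t, Measurable (A t))
    (βhat β g : ℕ → Ω → ℝ)
    (hinit : ∀ ω, βhat 1 ω = 0)
    (hg : ∀ t, 1 ≤ t → ∀ ω, g t ω = A t (fun s : Fin t => βhat (s.val + 1) ω))
    (hgbdd : ∀ t, 1 ≤ t → ∀ ω, |g t ω| ≤ G)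
    (hstep : ∀ t, 1 ≤ t → ∀ ω,
      β (t + 1) ω = max (-R) (min R (βhat t ω - η t * g t ω)))
    (hround : ∀ t, 1 ≤ t → ∀ ω,
      βhat (t + 1) ω = randomRound (ε t) (β (t + 1) ω) (U t ω))
    (βstar : ℝ) (hβstar : βstar ∈ Set.Icc (-R) R) :
    (∫ ω, ∑ t ∈ Finset.range T, g (t + 1) ω * (βhat (t + 1) ω - βstar) ∂P)
      ≤ (2 * R) ^ 2 / (2 * η T)
        + (1 / 2) * (G ^ 2 + γ ^ 2) * (∑ t ∈ Finset.range T, η (t + 1))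
        + γ * R * Real.sqrt T := by
  obtain ⟨hβs1, hβs2⟩ := hβstar
  -- representation of β (n+1) given representations of βhat s, s ≤ n
  have bRep : ∀ n : ℕ, 1 ≤ n →
      (∀ s, 1 ≤ s → s ≤ n → ∃ F : (Fin n → ℝ) → ℝ, Measurable F ∧
        ∀ ω, βhat s ω = F (fun i => U i.val ω)) →
      ∃ Φ : (Fin n → ℝ) → ℝ, Measurable Φ ∧
        ∀ ω, β (n+1) ω = Φ (fun i => U i.val ω) := by
    intro n hn IH
    obtain ⟨Fh, hFhm, hFhe⟩ := IH n hn le_rfl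
    choose Fs hFsm hFse using fun k : Fin n =>
      IH (k.val+1) (Nat.le_add_left 1 _) (Nat.succ_le_of_lt k.isLt)
    refine ⟨fun v => max (-R) (min R (Fh v - η n * A n (fun k => Fs k v))), ?_, ?_⟩
    · have hA : Measurable (fun v : Fin n → ℝ => A n (fun k => Fs k v)) :=
        (hAmeas n).comp (measurable_pi_lambda _ fun k => hFsm k)
      exact measurable_const.max
        (measurable_const.min (hFhm.sub (measurable_const.mul hA)))
    · intro ω
      rw [hstep n hn ω, hg n hn ω, hFhe ω]
      have : (fun s : Fin n => βhat (s.val+1) ω)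
          = fun k => Fs k (fun i => U i.val ω) := funext fun k => hFse k ω
      rw [this]
  -- representations of βhat s for s ≤ t
  have Q : ∀ t : ℕ, 1 ≤ t → ∀ s, 1 ≤ s → s ≤ t →
      ∃ F : (Fin t → ℝ) → ℝ, Measurable F ∧
        ∀ ω, βhat s ω = F (fun i => U i.val ω) := by
    intro t ht
    induction t, ht using Nat.le_induction with
    | base =>
      intro s hs1 hs2
      have hs : s = 1 := le_antisymm hs2 hs1
      subst hs
      exact ⟨fun _ => 0, measurable_const, fun ω => hinit ω⟩
    | succ n hn IH =>
      obtain ⟨Φ, hΦm, hΦe⟩ := bRep n hn IH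
      intro s hs1 hs2
      rcases Nat.lt_or_ge s (n+1) with hlt | hge
      · obtain ⟨F, hFm, hFe⟩ := IH s hs1 (Nat.lt_succ_iff.mp hlt)
        refine ⟨fun v => F (fun i => v i.castSucc), ?_, fun ω => ?_⟩
        · exact hFm.comp (measurable_pi_lambda _ fun i => measurable_pi_apply _)
        · rw [hFe ω]; rfl
      · have hs : s = n+1 := le_antisymm hs2 hge
        subst hs
        refine ⟨fun v => randomRound (ε n) (Φ (fun i : Fin n => v i.castSucc))
            (v ⟨n, Nat.lt_succ_self n⟩), ?_, fun ω => ?_⟩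
        · exact (measurable_rr (ε n)).comp
            ((hΦm.comp (measurable_pi_lambda _ fun i => measurable_pi_apply _)).prodMk
              (measurable_pi_apply _))
        · rw [hround n hn ω, hΦe ω]
          congr 1
  have hβrep : ∀ t, 1 ≤ t → ∃ Φ : (Fin t → ℝ) → ℝ, Measurable Φ ∧
      ∀ ω, β (t+1) ω = Φ (fun i => U i.val ω) := fun t ht => bRep t ht (Q t ht)
  -- measurability
  have hβhatmeas : ∀ t, 1 ≤ t → Measurable (βhat t) := by
    intro t ht
    obtain ⟨F, hFm, hFe⟩ := Q t ht t ht le_rfl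
    have : βhat t = fun ω => F (fun i : Fin t => U i.val ω) := funext hFe
    rw [this]
    exact hFm.comp (measurable_pi_lambda _ fun i => hUmeas i.val)
  have hβmeas : ∀ t, 1 ≤ t → Measurable (β (t+1)) := by
    intro t ht
    obtain ⟨F, hFm, hFe⟩ := hβrep t ht
    have : β (t+1) = fun ω => F (fun i : Fin t => U i.val ω) := funext hFe
    rw [this]
    exact hFm.comp (measurable_pi_lambda _ fun i => hUmeas i.val)
  have hgmeas : ∀ t, 1 ≤ t → Measurable (g t) := by
    intro t ht
    have : g t = fun ω => A t (fun s : Fin t => βhat (s.val+1) ω) := funext (hg t ht)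
    rw [this]
    exact (hAmeas t).comp (measurable_pi_lambda _ fun s =>
      hβhatmeas (s.val+1) (Nat.le_add_left 1 _))
  -- independence
  have hindep : ∀ t, 1 ≤ t → IndepFun (β (t+1)) (U t) P := by
    intro t ht
    obtain ⟨Φ, hΦm, hΦe⟩ := hβrep t ht
    have hdisj : Disjoint (Finset.range t) ({t} : Finset ℕ) := by
      simp [Finset.disjoint_singleton_right]
    have hbase := hUindep.indepFun_finset (Finset.range t) {t} hdisj hUmeas
    have hφ : Measurable (fun v : (↥(Finset.range t) → ℝ) =>
        Φ (fun i : Fin t => v ⟨i.val, Finset.mem_range.mpr i.isLt⟩)) :=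
      hΦm.comp (measurable_pi_lambda _ fun i => measurable_pi_apply _)
    have hψ : Measurable (fun v : (↥({t} : Finset ℕ) → ℝ) =>
        v ⟨t, Finset.mem_singleton_self t⟩) := measurable_pi_apply _
    have := hbase.comp hφ hψ
    have he1 : ((fun v : (↥(Finset.range t) → ℝ) =>
        Φ (fun i : Fin t => v ⟨i.val, Finset.mem_range.mpr i.isLt⟩)) ∘
        (fun a (i : ↥(Finset.range t)) => U i a)) = β (t+1) :=
      funext fun ω => (hΦe ω).symm
    have he2 : ((fun v : (↥({t} : Finset ℕ) → ℝ) => v ⟨t, Finset.mem_singleton_self t⟩) ∘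
        (fun a (i : ↥({t} : Finset ℕ)) => U i a)) = U t := rfl
    rwa [he1, he2] at this
  -- boundedness
  have hβhatbdd : ∀ t, 1 ≤ t → ∀ ω, |βhat t ω| ≤ R := by
    intro t ht
    induction t, ht using Nat.le_induction with
    | base => intro ω; rw [hinit ω]; simp [abs_of_nonneg, hR.le]
    | succ n hn IH =>
      intro ω
      rw [hround n hn ω]
      obtain ⟨k, hk⟩ := hgrid n
      refine rr_abs_le (hεpos n) k (by rw [hk]) ?_
      rw [hstep n hn ω]
      exact clamp_abs hR
  have hβbdd : ∀ t, 1 ≤ t → ∀ ω, |β (t+1) ω| ≤ R := by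
    intro t ht ω
    rw [hstep t ht ω]
    exact clamp_abs hR
  -- integrability helper
  have hbint : ∀ (f : Ω → ℝ) (M : ℝ), Measurable f → (∀ ω, |f ω| ≤ M) → Integrable f P := by
    intro f M hm hb
    exact Integrable.mono' (integrable_const M) hm.aestronglyMeasurable
      (Filter.Eventually.of_forall (by simpa [Real.norm_eq_abs] using hb))
  have hDbdd : ∀ t, 1 ≤ t → ∀ ω, |βhat t ω - βstar| ≤ 2*R := by
    intro t ht ω
    calc |βhat t ω - βstar| ≤ |βhat t ω| + |βstar| := abs_sub _ _
    _ ≤ R + R := add_le_add (hβhatbdd t ht ω) (abs_le.mpr ⟨hβs1, hβs2⟩)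
    _ = 2*R := by ring
  have hsqint : ∀ t, 1 ≤ t → Integrable (fun ω => (βhat t ω - βstar)^2) P := by
    intro t ht
    refine hbint _ ((2*R)^2) (((hβhatmeas t ht).sub measurable_const).pow_const 2) fun ω => ?_
    rw [abs_of_nonneg (sq_nonneg _)]
    nlinarith [hDbdd t ht ω, abs_nonneg (βhat t ω - βstar), sq_abs (βhat t ω - βstar)]
  have hgDint : ∀ t, 1 ≤ t → Integrable (fun ω => g t ω * (βhat t ω - βstar)) P := by
    intro t ht
    refine hbint _ (G * (2*R)) ((hgmeas t ht).mul ((hβhatmeas t ht).sub measurable_const))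
      fun ω => ?_
    rw [abs_mul]
    exact mul_le_mul (hgbdd t ht ω) (hDbdd t ht ω) (abs_nonneg _) hG
  have hg2int : ∀ t, 1 ≤ t → Integrable (fun ω => (g t ω)^2) P := by
    intro t ht
    refine hbint _ (G^2) ((hgmeas t ht).pow_const 2) fun ω => ?_
    rw [abs_of_nonneg (sq_nonneg _)]
    nlinarith [hgbdd t ht ω, abs_nonneg (g t ω), sq_abs (g t ω)]
  obtain ⟨a, ha⟩ : ∃ a : ℕ → ℝ, ∀ t, a t = ∫ ω, (βhat t ω - βstar)^2 ∂P :=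
    ⟨_, fun t => rfl⟩
  have ha_nonneg : ∀ t, 0 ≤ a t := fun t => by
    rw [ha t]; exact integral_nonneg fun ω => sq_nonneg _
  have ha_bdd : ∀ t, 1 ≤ t → a t ≤ (2*R)^2 := by
    intro t ht
    rw [ha t]
    calc ∫ ω, (βhat t ω - βstar)^2 ∂P ≤ ∫ _ω, (2*R)^2 ∂P := by
          refine integral_mono (hsqint t ht) (integrable_const _) fun ω => ?_
          nlinarith [hDbdd t ht ω, abs_nonneg (βhat t ω - βstar), sq_abs (βhat t ω - βstar)]
    _ = (2*R)^2 := by simp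
  -- per-step expected inequality
  have hper : ∀ t, 1 ≤ t → ∫ ω, g t ω * (βhat t ω - βstar) ∂P
      ≤ (a t - a (t+1)) / (2 * η t) + (1/2) * (G^2 + γ^2) * η t := by
    intro t ht
    obtain ⟨k, hk⟩ := hgrid t
    -- step 1: a (t+1) ≤ ∫ (β (t+1) - βstar)^2 + (ε t)^2
    have s1 : a (t+1) ≤ (∫ ω, (β (t+1) ω - βstar)^2 ∂P) + (ε t)^2 := by
      rw [ha (t+1)]
      have hre : (fun ω => (βhat (t+1) ω - βstar)^2)
          = fun ω => (randomRound (ε t) (β (t+1) ω) (U t ω) - βstar)^2 :=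
        funext fun ω => by rw [hround t ht ω]
      rw [hre]
      exact key_step P (β (t+1)) (U t) (hβmeas t ht) (hUmeas t) (hindep t ht)
        (hUunif t) (ε t) βstar R (hεpos t) (hβbdd t ht)
    -- step 2: ∫ (β (t+1) - βstar)^2 ≤ a t - 2 η ∫ gD + η² G²
    have hg2le : (∫ ω, (g t ω)^2 ∂P) ≤ G^2 := by
      have h1 : (∫ ω, (g t ω)^2 ∂P) ≤ ∫ _ω, G^2 ∂P :=
        integral_mono (hg2int t ht) (integrable_const _) fun ω => by
          nlinarith [hgbdd t ht ω, abs_nonneg (g t ω), sq_abs (g t ω)]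
      simpa using h1
    have s2 : (∫ ω, (β (t+1) ω - βstar)^2 ∂P)
        ≤ a t - 2 * η t * (∫ ω, g t ω * (βhat t ω - βstar) ∂P) + (η t)^2 * G^2 := by
      have hpt : ∀ ω, (β (t+1) ω - βstar)^2
          ≤ (βhat t ω - βstar)^2 - 2 * η t * (g t ω * (βhat t ω - βstar))
            + (η t)^2 * (g t ω)^2 := by
        intro ω
        rw [hstep t ht ω]
        calc (max (-R) (min R (βhat t ω - η t * g t ω)) - βstar)^2
            ≤ ((βhat t ω - η t * g t ω) - βstar)^2 := clamp_sq hβs1 hβs2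
        _ = (βhat t ω - βstar)^2 - 2 * η t * (g t ω * (βhat t ω - βstar))
            + (η t)^2 * (g t ω)^2 := by ring
      have hrhsint : Integrable (fun ω => (βhat t ω - βstar)^2
          - 2 * η t * (g t ω * (βhat t ω - βstar)) + (η t)^2 * (g t ω)^2) P :=
        (((hsqint t ht).sub ((hgDint t ht).const_mul _)).add ((hg2int t ht).const_mul _))
      have hlhsint : Integrable (fun ω => (β (t+1) ω - βstar)^2) P := by
        refine hbint _ ((2*R)^2) (((hβmeas t ht).sub measurable_const).pow_const 2) fun ω => ?_
        have hD : |β (t+1) ω - βstar| ≤ 2*R := by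
          calc |β (t+1) ω - βstar| ≤ |β (t+1) ω| + |βstar| := abs_sub _ _
          _ ≤ R + R := add_le_add (hβbdd t ht ω) (abs_le.mpr ⟨hβs1, hβs2⟩)
          _ = 2*R := by ring
        rw [abs_of_nonneg (sq_nonneg _)]
        nlinarith [abs_nonneg (β (t+1) ω - βstar), sq_abs (β (t+1) ω - βstar)]
      calc (∫ ω, (β (t+1) ω - βstar)^2 ∂P)
          ≤ ∫ ω, ((βhat t ω - βstar)^2 - 2 * η t * (g t ω * (βhat t ω - βstar))
            + (η t)^2 * (g t ω)^2) ∂P := integral_mono hlhsint hrhsint hpt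
      _ = (∫ ω, ((βhat t ω - βstar)^2 - 2 * η t * (g t ω * (βhat t ω - βstar))) ∂P)
            + ∫ ω, (η t)^2 * (g t ω)^2 ∂P :=
          integral_add ((hsqint t ht).sub ((hgDint t ht).const_mul _))
            ((hg2int t ht).const_mul _)
      _ = ((∫ ω, (βhat t ω - βstar)^2 ∂P)
            - ∫ ω, 2 * η t * (g t ω * (βhat t ω - βstar)) ∂P)
            + (η t)^2 * ∫ ω, (g t ω)^2 ∂P := by
          rw [integral_sub (hsqint t ht) ((hgDint t ht).const_mul _), integral_const_mul, integral_const_mul]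
      _ = a t - 2 * η t * (∫ ω, g t ω * (βhat t ω - βstar) ∂P)
            + (η t)^2 * (∫ ω, (g t ω)^2 ∂P) := by
          rw [integral_const_mul, ha t]
      _ ≤ a t - 2 * η t * (∫ ω, g t ω * (βhat t ω - βstar) ∂P) + (η t)^2 * G^2 := by
          nlinarith [hg2le, sq_nonneg (η t)]
    -- combine
    have hεsq : (ε t)^2 ≤ γ^2 * (η t)^2 := by
      nlinarith [hεpos t, hεη t, hηpos t, hγ]
    have h2η : (0:ℝ) < 2 * η t := by linarith [hηpos t]
    have hkey : (∫ ω, g t ω * (βhat t ω - βstar) ∂P) - (1/2) * (G^2 + γ^2) * η t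
        ≤ (a t - a (t+1)) / (2 * η t) := by
      rw [le_div_iff₀ h2η]
      nlinarith [s1, s2]
    linarith
  -- main induction
  have hM : ∀ n, 1 ≤ n →
      (∑ t ∈ Finset.range n, ∫ ω, g (t+1) ω * (βhat (t+1) ω - βstar) ∂P)
        + a (n+1) / (2 * η n)
      ≤ (2*R)^2 / (2 * η n)
        + ∑ t ∈ Finset.range n, (1/2) * (G^2 + γ^2) * η (t+1) := by
    intro n hn
    induction n, hn using Nat.le_induction with
    | base =>
      simp only [Finset.sum_range_one]
      have h1 := hper 1 le_rfl
      have hb := ha_bdd 1 le_rfl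
      have h2η : (0:ℝ) < 2 * η 1 := by linarith [hηpos 1]
      have hdiv : a 1 / (2 * η 1) ≤ (2*R)^2 / (2 * η 1) :=
        (div_le_div_iff_of_pos_right h2η).mpr hb
      have hsame : (a 1 - a 2)/(2*η 1) + a 2/(2*η 1) = a 1/(2*η 1) := by ring
      linarith [h1, hdiv, hsame]
    | succ n hn IH =>
      have hterm := hper (n+1) (Nat.le_add_left 1 n)
      have h2a : (0:ℝ) < 2 * η n := by linarith [hηpos n]
      have h2b : (0:ℝ) < 2 * η (n+1) := by linarith [hηpos (n+1)]
      have huv : (2 * η n)⁻¹ ≤ (2 * η (n+1))⁻¹ := by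
        apply inv_anti₀ h2b
        have := hηmono n (n+1) (Nat.le_succ n)
        linarith
      have hbd := ha_bdd (n+1) (Nat.le_add_left 1 n)
      have hint1 : a (n+1) * ((2 * η (n+1))⁻¹ - (2 * η n)⁻¹)
          ≤ (2*R)^2 * ((2 * η (n+1))⁻¹ - (2 * η n)⁻¹) :=
        mul_le_mul_of_nonneg_right hbd (by linarith)
      rw [Finset.sum_range_succ, Finset.sum_range_succ]
      simp only [div_eq_mul_inv] at IH hterm ⊢
      linarith [IH, hterm, hint1]
  -- conclusion
  have hsplit : (∫ ω, ∑ t ∈ Finset.range T, g (t+1) ω * (βhat (t+1) ω - βstar) ∂P)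
      = ∑ t ∈ Finset.range T, ∫ ω, g (t+1) ω * (βhat (t+1) ω - βstar) ∂P :=
    integral_finset_sum _ fun t _ => hgDint (t+1) (Nat.le_add_left 1 t)
  have hsqrt : 0 ≤ γ * R * Real.sqrt T :=
    mul_nonneg (mul_nonneg hγ.le hR.le) (Real.sqrt_nonneg _)
  have hfin := hM T hT
  have hapos := ha_nonneg (T+1)
  have h2ηT : (0:ℝ) < 2 * η T := by linarith [hηpos T]
  have haT : 0 ≤ a (T+1) / (2 * η T) := div_nonneg hapos h2ηT.le
  rw [hsplit]
  have hsum : (1/2) * (G^2 + γ^2) * (∑ t ∈ Finset.range T, η (t+1))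
      = ∑ t ∈ Finset.range T, (1/2) * (G^2 + γ^2) * η (t+1) := by
    rw [Finset.mul_sum]
  rw [hsum]
  have : (2*R)^2 = (2 * R)^2 := by ring
  linarith [hfin]
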